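/- If P is a polynomial of degree n, Q(z) = z^n·conj(P(1/conj(z))), α a complex number, and p ≥ 1, then ∫₀^{2π}∫₀^{2π} |D_α Q(e^{iθ}) + e^{iβ} D_α P(e^{iθ})|^p dθ dβ ≤ 2π n^p (|α| + 1)^p ∫₀^{2π} |P(e^{iθ})|^p dθ. -/

import Mathlib

set_option maxHeartbeats 1600000

open Polynomial Complex Real MeasureTheory intervalIntegral Finset

lemma swapFubini (f : ℝ → ℝ → ℝ) (hf : Continuous (Function.uncurry f)) :
    ∫ x in (0:ℝ)..(2*π), ∫ y in (0:ℝ)..(2*π), f x y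
      = ∫ y in (0:ℝ)..(2*π), ∫ x in (0:ℝ)..(2*π), f x y := by
  have h2 : (0:ℝ) ≤ 2*π := by positivity
  have hint : Integrable (Function.uncurry f)
      ((volume.restrict (Set.Ioc (0:ℝ) (2*π))).prod (volume.restrict (Set.Ioc (0:ℝ) (2*π)))) := by
    rw [Measure.prod_restrict]
    exact (hf.continuousOn.integrableOn_compact (isCompact_Icc.prod isCompact_Icc)).mono_set
      (Set.prod_mono Set.Ioc_subset_Icc_self Set.Ioc_subset_Icc_self)
  simp only [intervalIntegral.integral_of_le h2]
  exact MeasureTheory.integral_integral_swap hint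

lemma shift_int (f : ℝ → ℝ) (hf : Function.Periodic f (2*π)) (c : ℝ) :
    ∫ x in (0:ℝ)..(2*π), f (x + c) = ∫ x in (0:ℝ)..(2*π), f x := by
  rw [intervalIntegral.integral_comp_add_right]
  have := hf.intervalIntegral_add_eq c 0
  rw [add_comm (2*π) c]
  simpa using this

lemma expp (x : ℝ) : Complex.exp (I*((x + 2*π : ℝ):ℂ)) = Complex.exp (I*(x:ℝ)) := by
  push_cast
  rw [mul_add, Complex.exp_add]
  have : Complex.exp (I * (2*π)) = 1 := by
    have := Complex.exp_two_pi_mul_I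
    rw [mul_comm] at this
    simpa using this
  rw [this, mul_one]

lemma phase_int (p : ℝ) (A B : ℂ) :
    ∫ β in (0:ℝ)..(2*π), (‖A + Complex.exp (I*β)*B‖)^p
      = ∫ β in (0:ℝ)..(2*π), (‖(‖A‖ : ℂ) + Complex.exp (I*β)*(‖B‖ : ℂ)‖)^p := by
  have key : ∀ β : ℝ, ‖A + Complex.exp (I*β)*B‖
      = ‖(‖A‖ : ℂ) + Complex.exp (I*((β:ℝ) + (B.arg - A.arg)))*(‖B‖ : ℂ)‖ := by
    intro β
    have hA : (‖A‖ : ℂ) * Complex.exp (A.arg * I) = A := Complex.norm_mul_exp_arg_mul_I A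
    have hB : (‖B‖ : ℂ) * Complex.exp (B.arg * I) = B := Complex.norm_mul_exp_arg_mul_I B
    have hexp : Complex.exp (A.arg * I) * Complex.exp (I*((β:ℝ) + (B.arg - A.arg)))
        = Complex.exp (I*β) * Complex.exp (B.arg * I) := by
      rw [← Complex.exp_add, ← Complex.exp_add]
      congr 1
      push_cast
      ring
    have factored : A + Complex.exp (I*β)*B
        = Complex.exp (A.arg*I) * ((‖A‖ : ℂ) + Complex.exp (I*((β:ℝ) + (B.arg - A.arg)))*(‖B‖ : ℂ)) := by
      linear_combination (-1:ℂ)*hA - Complex.exp (I*(β:ℝ))*hB - (‖B‖ : ℂ)*hexp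
    rw [factored, norm_mul]
    have : ‖Complex.exp (A.arg*I)‖ = 1 := by
      rw [Complex.norm_exp]; simp
    rw [this, one_mul]
  have hper : Function.Periodic (fun x : ℝ => (‖(‖A‖ : ℂ) + Complex.exp (I*x)*(‖B‖ : ℂ)‖)^p) (2*π) := by
    intro x
    simp only
    rw [expp x]
  have h1 : ∫ β in (0:ℝ)..(2*π), (‖A + Complex.exp (I*β)*B‖)^p
      = ∫ β in (0:ℝ)..(2*π), (fun x : ℝ => (‖(‖A‖ : ℂ) + Complex.exp (I*x)*(‖B‖ : ℂ)‖)^p) (β + (B.arg - A.arg)) := by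
    apply intervalIntegral.integral_congr
    intro β _
    simp only
    rw [key β]
    norm_num
  rw [h1]
  exact shift_int _ hper _

lemma geom_exp (n : ℕ) (hn : 1 ≤ n) (β : ℝ) (d : ℤ) :
    ∑ j ∈ Finset.range n, Complex.exp (I * d * (((β + 2*π*j)/n : ℝ) : ℂ))
      = if (n:ℤ) ∣ d then (n:ℂ) * Complex.exp (I * d * (β/n : ℝ)) else 0 := by
  have hn0 : (n:ℂ) ≠ 0 := by
    simpa using (Nat.one_le_iff_ne_zero.mp hn)
  have hterm : ∀ j ∈ Finset.range n, Complex.exp (I * d * (((β + 2*π*j)/n : ℝ) : ℂ))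
      = Complex.exp (I * d * (β/n : ℝ)) * (Complex.exp (((d:ℂ)/n) * (2*π*I)))^j := by
    intro j _
    rw [← Complex.exp_nat_mul, ← Complex.exp_add]
    congr 1
    push_cast
    field_simp
  rw [Finset.sum_congr rfl hterm, ← Finset.mul_sum]
  by_cases hdvd : (n:ℤ) ∣ d
  · obtain ⟨e, he⟩ := hdvd
    have hr : Complex.exp (((d:ℂ)/n) * (2*π*I)) = 1 := by
      have hde : ((d:ℂ)/n) = (e:ℂ) := by
        rw [he]; push_cast; field_simp
      rw [hde]
      exact Complex.exp_int_mul_two_pi_mul_I e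
    rw [if_pos ⟨e, he⟩, hr]
    simp [mul_comm]
  · have hr : Complex.exp (((d:ℂ)/n) * (2*π*I)) ≠ 1 := by
      intro h
      rw [Complex.exp_eq_one_iff] at h
      obtain ⟨m, hm⟩ := h
      apply hdvd
      refine ⟨m, ?_⟩
      have h2 : (2*(π:ℂ)*I) ≠ 0 := by
        simp [Real.pi_ne_zero, Complex.I_ne_zero]
      have hdn : (d:ℂ)/n = (m:ℂ) := mul_right_cancel₀ h2 hm
      have : (d:ℂ) = n * m := by
        rw [← hdn]; field_simp
      exact_mod_cast this
    rw [if_neg hdvd, geom_sum_eq hr]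
    have hpow : (Complex.exp (((d:ℂ)/n) * (2*π*I)))^n = 1 := by
      rw [← Complex.exp_nat_mul]
      have : (n:ℂ) * (((d:ℂ)/n) * (2*π*I)) = (d:ℂ) * (2*π*I) := by
        field_simp
      rw [this]
      exact Complex.exp_int_mul_two_pi_mul_I d
    rw [hpow]
    simp

lemma inner_l (n : ℕ) (hn : 1 ≤ n) (β : ℝ) (k m : ℕ) (hk : k ≤ n) (hm : m < n) :
    ∑ l ∈ Finset.range n, (if (n:ℤ) ∣ ((m:ℤ) - l + k) then (n:ℂ) * Complex.exp (I * (((m:ℤ) - l + k : ℤ) : ℂ) * ((β/n : ℝ):ℂ)) else 0)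
      = if m + k < n then (n:ℂ) else (n:ℂ) * Complex.exp (I * β) := by
  have hn0 : 0 < n := hn
  have hn0' : (n:ℂ) ≠ 0 := by exact_mod_cast hn0.ne'
  set l₀ : ℕ := (m + k) % n with hl₀
  have hl₀mem : l₀ ∈ Finset.range n := Finset.mem_range.mpr (Nat.mod_lt _ hn0)
  have hdm := Nat.div_add_mod (m + k) n
  have hdm' : (n:ℤ) * ((m + k) / n : ℕ) + (l₀:ℤ) = (m:ℤ) + k := by exact_mod_cast congrArg (Nat.cast : ℕ → ℤ) hdm
  have harg : (m:ℤ) - l₀ + k = (n : ℤ) * ((m + k) / n : ℕ) := by omega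
  have hdvd₀ : (n:ℤ) ∣ ((m:ℤ) - l₀ + k) := by rw [harg]; exact Dvd.intro _ rfl
  rw [Finset.sum_eq_single l₀]
  · rw [if_pos hdvd₀, harg]
    split_ifs with h
    · have hq : (m + k) / n = 0 := Nat.div_eq_of_lt h
      rw [hq]
      simp
    · have hq : (m + k) / n = 1 := Nat.div_eq_of_lt_le (by omega) (by omega)
      rw [hq]
      have harg2 : I * (((n:ℤ) * ((1:ℕ):ℤ) : ℤ):ℂ) * ((β/n : ℝ):ℂ) = I * (β:ℂ) := by
        push_cast
        field_simp
      rw [harg2]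
  · intro l hl hne
    rw [if_neg]
    intro hdvd
    apply hne
    have hsub : (n:ℤ) ∣ ((l₀:ℤ) - l) := by
      have hd := dvd_sub hdvd hdvd₀
      have h2 : (m:ℤ) - l + k - ((m:ℤ) - l₀ + k) = (l₀:ℤ) - l := by ring
      rwa [h2] at hd
    have habs : |(l₀:ℤ) - l| < n := by
      have hl' : l < n := Finset.mem_range.mp hl
      have hl₀' : l₀ < n := Finset.mem_range.mp hl₀mem
      rw [abs_lt]
      omega
    have := Int.eq_zero_of_abs_lt_dvd hsub habs
    omega
  · intro h
    exact absurd hl₀mem h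

lemma dft_count (n : ℕ) (hn : 1 ≤ n) (β : ℝ) (k : ℕ) (hk : k ≤ n) :
    ∑ j ∈ Finset.range n,
        ((Complex.normSq (∑ m ∈ Finset.range n, Complex.exp (I * m * (((β + 2*π*j)/n : ℝ):ℂ))) : ℝ) : ℂ)
          * Complex.exp (I * k * (((β + 2*π*j)/n : ℝ):ℂ))
      = ((n - k : ℕ) : ℂ) * n + (k : ℂ) * (n:ℂ) * Complex.exp (I * β) := by
  have step1 : ∀ j ∈ Finset.range n,
      ((Complex.normSq (∑ m ∈ Finset.range n, Complex.exp (I * m * (((β + 2*π*j)/n : ℝ):ℂ))) : ℝ) : ℂ)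
          * Complex.exp (I * k * (((β + 2*π*j)/n : ℝ):ℂ))
        = ∑ m ∈ Finset.range n, ∑ l ∈ Finset.range n,
            Complex.exp (I * (((m:ℤ) - l + k : ℤ) : ℂ) * (((β + 2*π*j)/n : ℝ):ℂ)) := by
    intro j _
    set t : ℂ := (((β + 2*π*j)/n : ℝ):ℂ) with ht
    rw [← Complex.mul_conj]
    rw [map_sum]
    rw [Finset.sum_mul_sum]
    rw [Finset.sum_mul]
    refine Finset.sum_congr rfl fun m _ => ?_
    rw [Finset.sum_mul]
    refine Finset.sum_congr rfl fun l _ => ?_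
    rw [← Complex.exp_conj]
    rw [← Complex.exp_add, ← Complex.exp_add]
    congr 1
    have hconj : (starRingEnd ℂ) (I * l * t) = -(I * l * t) := by
      rw [map_mul, map_mul, Complex.conj_I, ht, Complex.conj_ofReal]
      rw [Complex.conj_natCast]
      ring
    rw [hconj]
    push_cast
    ring
  rw [Finset.sum_congr rfl step1]
  rw [Finset.sum_comm]
  have step2 : ∀ m ∈ Finset.range n,
      (∑ l ∈ Finset.range n, ∑ j ∈ Finset.range n,
          Complex.exp (I * (((m:ℤ) - l + k : ℤ) : ℂ) * (((β + 2*π*j)/n : ℝ):ℂ)))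
        = if m + k < n then (n:ℂ) else (n:ℂ) * Complex.exp (I * β) := by
    intro m hm
    have hswap : ∀ l ∈ Finset.range n,
        (∑ j ∈ Finset.range n, Complex.exp (I * (((m:ℤ) - l + k : ℤ) : ℂ) * (((β + 2*π*j)/n : ℝ):ℂ)))
          = if (n:ℤ) ∣ ((m:ℤ) - l + k) then (n:ℂ) * Complex.exp (I * (((m:ℤ) - l + k : ℤ) : ℂ) * ((β/n : ℝ):ℂ)) else 0 := by
      intro l _
      have := geom_exp n hn β ((m:ℤ) - l + k)
      convert this using 2
    rw [Finset.sum_congr rfl hswap]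
    exact inner_l n hn β k m hk (Finset.mem_range.mp hm)
  have step1b : (∑ m ∈ Finset.range n, ∑ j ∈ Finset.range n, ∑ l ∈ Finset.range n,
      Complex.exp (I * (((m:ℤ) - l + k : ℤ) : ℂ) * (((β + 2*π*j)/n : ℝ):ℂ)))
      = ∑ m ∈ Finset.range n, ∑ l ∈ Finset.range n, ∑ j ∈ Finset.range n,
      Complex.exp (I * (((m:ℤ) - l + k : ℤ) : ℂ) * (((β + 2*π*j)/n : ℝ):ℂ)) :=
    Finset.sum_congr rfl fun m _ => Finset.sum_comm
  rw [step1b, Finset.sum_congr rfl step2]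
  have hcond : ∀ m ∈ Finset.range n, (if m + k < n then (n:ℂ) else (n:ℂ) * Complex.exp (I * β))
      = (if m < n - k then (n:ℂ) else (n:ℂ) * Complex.exp (I * β)) :=
    fun m _ => if_congr (by omega) rfl rfl
  rw [Finset.sum_congr rfl hcond]
  rw [← Finset.sum_range_add_sum_Ico _ (Nat.sub_le n k)]
  have e1 : (∑ m ∈ Finset.range (n - k), (if m < n - k then (n:ℂ) else (n:ℂ) * Complex.exp (I * β)))
      = ((n - k : ℕ) : ℂ) * n := by
    rw [Finset.sum_congr rfl (fun m hm => if_pos (Finset.mem_range.mp hm))]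
    rw [Finset.sum_const, Finset.card_range, nsmul_eq_mul]
  have e2 : (∑ m ∈ Finset.Ico (n - k) n, (if m < n - k then (n:ℂ) else (n:ℂ) * Complex.exp (I * β)))
      = (k : ℂ) * (n:ℂ) * Complex.exp (I * β) := by
    rw [Finset.sum_congr rfl (fun m hm => if_neg (by
      have := Finset.mem_Ico.mp hm
      omega))]
    rw [Finset.sum_const, Nat.card_Ico, nsmul_eq_mul]
    have : n - (n - k) = k := by omega
    rw [this]
    ring
  rw [e1, e2]

lemma zderiv (R : Polynomial ℂ) (N : ℕ) (h : R.natDegree < N) (z : ℂ) :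
    z * (derivative R).eval z = ∑ k ∈ Finset.range N, (k : ℂ) * R.coeff k * z ^ k := by
  have hd : (derivative R).natDegree < N := lt_of_le_of_lt (Polynomial.natDegree_derivative_le R) (by omega)
  rw [Polynomial.eval_eq_sum_range' hd, Finset.mul_sum]
  have h1 : ∀ i ∈ Finset.range N, z * ((derivative R).coeff i * z ^ i)
      = ((i+1 : ℕ) : ℂ) * R.coeff (i+1) * z ^ (i+1) := by
    intro i _
    rw [Polynomial.coeff_derivative]
    push_cast
    ring
  rw [Finset.sum_congr rfl h1]
  have h2 : (∑ k ∈ Finset.range (N+1), (k : ℂ) * R.coeff k * z ^ k)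
      = ∑ i ∈ Finset.range N, ((i+1 : ℕ) : ℂ) * R.coeff (i+1) * z ^ (i+1) := by
    rw [Finset.sum_range_succ']
    simp
  have h3 : (∑ k ∈ Finset.range (N+1), (k : ℂ) * R.coeff k * z ^ k)
      = (∑ k ∈ Finset.range N, (k : ℂ) * R.coeff k * z ^ k) + (N:ℂ) * R.coeff N * z ^ N := by
    rw [Finset.sum_range_succ]
  rw [← h2, h3, Polynomial.coeff_eq_zero_of_natDegree_lt h]
  ring

lemma poly_avg (n : ℕ) (hn : 1 ≤ n) (β : ℝ) (R : Polynomial ℂ) (hR : R.natDegree ≤ n) (z : ℂ) :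
    ∑ j ∈ Finset.range n,
        ((Complex.normSq (∑ m ∈ Finset.range n, Complex.exp (I * m * (((β + 2*π*j)/n : ℝ):ℂ))) : ℝ) : ℂ)
          * R.eval (z * Complex.exp (I * (((β + 2*π*j)/n : ℝ):ℂ)))
      = (n:ℂ) * ((n:ℂ) * R.eval z + (Complex.exp (I * β) - 1) * (z * (derivative R).eval z)) := by
  have hdeg : R.natDegree < n + 1 := by omega
  have expand : ∀ j ∈ Finset.range n,
      ((Complex.normSq (∑ m ∈ Finset.range n, Complex.exp (I * m * (((β + 2*π*j)/n : ℝ):ℂ))) : ℝ) : ℂ)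
          * R.eval (z * Complex.exp (I * (((β + 2*π*j)/n : ℝ):ℂ)))
        = ∑ k ∈ Finset.range (n+1), (R.coeff k * z ^ k) *
            (((Complex.normSq (∑ m ∈ Finset.range n, Complex.exp (I * m * (((β + 2*π*j)/n : ℝ):ℂ))) : ℝ) : ℂ)
              * Complex.exp (I * k * (((β + 2*π*j)/n : ℝ):ℂ))) := by
    intro j _
    rw [Polynomial.eval_eq_sum_range' hdeg, Finset.mul_sum]
    refine Finset.sum_congr rfl fun k _ => ?_
    rw [mul_pow, ← Complex.exp_nat_mul]
    have : (k:ℂ) * (I * (((β + 2*π*j)/n : ℝ):ℂ)) = I * k * (((β + 2*π*j)/n : ℝ):ℂ) := by ring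
    rw [this]
    ring
  rw [Finset.sum_congr rfl expand, Finset.sum_comm]
  have inner : ∀ k ∈ Finset.range (n+1),
      (∑ j ∈ Finset.range n, (R.coeff k * z ^ k) *
          (((Complex.normSq (∑ m ∈ Finset.range n, Complex.exp (I * m * (((β + 2*π*j)/n : ℝ):ℂ))) : ℝ) : ℂ)
            * Complex.exp (I * k * (((β + 2*π*j)/n : ℝ):ℂ))))
        = (R.coeff k * z ^ k) * (((n:ℂ) - k) * n + (k : ℂ) * (n:ℂ) * Complex.exp (I * β)) := by
    intro k hk
    rw [← Finset.mul_sum, dft_count n hn β k (Nat.lt_succ_iff.mp (Finset.mem_range.mp hk))]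
    congr 2
    rw [Nat.cast_sub (by exact Nat.lt_succ_iff.mp (Finset.mem_range.mp hk))]
  rw [Finset.sum_congr rfl inner]
  rw [zderiv R (n+1) hdeg z, Polynomial.eval_eq_sum_range' hdeg, Finset.mul_sum, Finset.mul_sum,
    mul_add, Finset.mul_sum, Finset.mul_sum, ← Finset.sum_add_distrib]
  refine Finset.sum_congr rfl fun k _ => ?_
  ring

lemma cont_exp_circle : Continuous fun θ : ℝ => Complex.exp (I * (θ:ℂ)) :=
  Complex.continuous_exp.comp (continuous_const.mul Complex.continuous_ofReal)

lemma cont_abs_rpow {X : Type*} [TopologicalSpace X] (p : ℝ) (hp : 0 ≤ p) (f : X → ℂ) (hf : Continuous f) :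
    Continuous fun x => (‖f x‖)^p :=
  Continuous.rpow_const (continuous_norm.comp hf) (fun _ => Or.inr hp)

lemma per_g (P : Polynomial ℂ) (p : ℝ) :
    Function.Periodic (fun y : ℝ => (‖P.eval (Complex.exp (I * (y:ℂ)))‖)^p) (2*π) := by
  intro x
  simp only
  rw [expp x]

lemma core_ineq (n : ℕ) (hn : 1 ≤ n) (P : Polynomial ℂ) (hPdeg : P.natDegree ≤ n)
    (β : ℝ) (p : ℝ) (hp : 1 ≤ p) :
    (∫ θ in (0:ℝ)..(2*π), (‖(n:ℂ) * P.eval (Complex.exp (I*(θ:ℂ)))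
        + (Complex.exp (I*(β:ℂ)) - 1) * (Complex.exp (I*(θ:ℂ)) * (derivative P).eval (Complex.exp (I*(θ:ℂ))))‖)^p)
      ≤ (n:ℝ)^p * ∫ θ in (0:ℝ)..(2*π), (‖P.eval (Complex.exp (I*(θ:ℂ)))‖)^p := by
  have hp0 : (0:ℝ) ≤ p := le_trans zero_le_one hp
  have h2π : (0:ℝ) ≤ 2*π := by positivity
  have hn0 : (0:ℝ) < n := by exact_mod_cast hn
  set t : ℕ → ℝ := fun j => (β + 2*π*j)/n with ht
  set W : ℕ → ℝ := fun j => Complex.normSq (∑ m ∈ Finset.range n, Complex.exp (I * m * ((t j : ℝ):ℂ))) with hW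
  have hWnn : ∀ j, 0 ≤ W j := fun j => Complex.normSq_nonneg _
  have hWsum : ∑ j ∈ Finset.range n, W j = (n:ℝ)^2 := by
    have h0 := dft_count n hn β 0 (Nat.zero_le n)
    have h0' : ∑ j ∈ Finset.range n, ((W j : ℝ):ℂ) = (n:ℂ)^2 := by
      rw [hW]
      simp only [ht]
      convert h0 using 2 with j
      · rw [Nat.cast_zero]
        norm_num
      · rw [Nat.sub_zero]
        push_cast
        ring
    exact_mod_cast h0'
  set g : ℝ → ℝ := fun y => (‖P.eval (Complex.exp (I * (y:ℂ)))‖)^p with hg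
  have hgcont : Continuous g := cont_abs_rpow p hp0 _ ((P.continuous_aeval).comp cont_exp_circle)
  have hn2 : ((n:ℝ)^2) ≠ 0 := by positivity
  set F : ℝ → ℂ := fun θ => (n:ℂ) * P.eval (Complex.exp (I*(θ:ℂ)))
      + (Complex.exp (I*(β:ℂ)) - 1) * (Complex.exp (I*(θ:ℂ)) * (derivative P).eval (Complex.exp (I*(θ:ℂ)))) with hF
  have hFcont : Continuous F := by
    apply Continuous.add
    · exact continuous_const.mul ((P.continuous_aeval).comp cont_exp_circle)
    · exact continuous_const.mul (cont_exp_circle.mul (((derivative P).continuous_aeval).comp cont_exp_circle))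
  have key : ∀ θ : ℝ, (‖F θ‖)^p
      ≤ ∑ j ∈ Finset.range n, (W j/(n:ℝ)^2) * ((n:ℝ)^p * g (θ + t j)) := by
    intro θ
    set z : ℂ := Complex.exp (I*(θ:ℂ)) with hz
    set s : ℕ → ℝ := fun j => ‖P.eval (z * Complex.exp (I * ((t j : ℝ):ℂ)))‖ with hs
    have hsnn : ∀ j, 0 ≤ s j := fun j => norm_nonneg _
    have havg := poly_avg n hn β P hPdeg z
    have habs : (n:ℝ) * ‖F θ‖ ≤ ∑ j ∈ Finset.range n, W j * s j := by
      have h1 : ‖(n:ℂ) * F θ‖ = (n:ℝ) * ‖F θ‖ := by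
        rw [norm_mul, Complex.norm_natCast]
      have h2 : (n:ℂ) * F θ = ∑ j ∈ Finset.range n,
          ((W j : ℝ):ℂ) * P.eval (z * Complex.exp (I * ((t j : ℝ):ℂ))) := by
        rw [hF]
        simp only
        rw [havg]
      rw [← h1, h2]
      refine le_trans (norm_sum_le _ _) (le_of_eq ?_)
      refine Finset.sum_congr rfl fun j _ => ?_
      rw [norm_mul, Complex.norm_real, Real.norm_of_nonneg (hWnn j)]
    have hchain : ‖F θ‖ ≤ ∑ j ∈ Finset.range n, (W j/(n:ℝ)^2) * ((n:ℝ) * s j) := by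
      have heq : ∑ j ∈ Finset.range n, (W j/(n:ℝ)^2) * ((n:ℝ) * s j)
          = (∑ j ∈ Finset.range n, W j * s j) / n := by
        rw [Finset.sum_div]
        refine Finset.sum_congr rfl fun j _ => ?_
        field_simp
      rw [heq, le_div_iff₀ hn0]
      rw [mul_comm]
      exact habs
    have hjensen : (∑ j ∈ Finset.range n, (W j/(n:ℝ)^2) * ((n:ℝ) * s j))^p
        ≤ ∑ j ∈ Finset.range n, (W j/(n:ℝ)^2) * ((n:ℝ) * s j)^p := by
      refine Real.rpow_arith_mean_le_arith_mean_rpow (Finset.range n) _ _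
        (fun j _ => div_nonneg (hWnn j) (by positivity))
        ?_ (fun j _ => mul_nonneg (le_of_lt hn0) (hsnn j)) hp
      rw [← Finset.sum_div, hWsum]
      field_simp
    have hsg : ∀ j, ((n:ℝ) * s j)^p = (n:ℝ)^p * g (θ + t j) := by
      intro j
      rw [Real.mul_rpow (le_of_lt hn0) (hsnn j)]
      have hzz : z * Complex.exp (I * ((t j:ℝ):ℂ)) = Complex.exp (I * ((θ + t j : ℝ):ℂ)) := by
        rw [hz, ← Complex.exp_add]
        congr 1
        push_cast
        ring
      simp only [hs, hg, hzz]
    calc (‖F θ‖)^p ≤ (∑ j ∈ Finset.range n, (W j/(n:ℝ)^2) * ((n:ℝ) * s j))^p :=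
          Real.rpow_le_rpow (norm_nonneg _) hchain hp0
      _ ≤ ∑ j ∈ Finset.range n, (W j/(n:ℝ)^2) * ((n:ℝ) * s j)^p := hjensen
      _ = ∑ j ∈ Finset.range n, (W j/(n:ℝ)^2) * ((n:ℝ)^p * g (θ + t j)) := by
          refine Finset.sum_congr rfl fun j _ => ?_
          rw [hsg j]
  -- integral assembly
  have hsummandcont : ∀ j : ℕ, Continuous (fun θ : ℝ => (W j/(n:ℝ)^2) * ((n:ℝ)^p * g (θ + t j))) := by
    intro j
    exact continuous_const.mul (continuous_const.mul (hgcont.comp (continuous_id.add continuous_const)))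
  have step1 : (∫ θ in (0:ℝ)..(2*π), (‖F θ‖)^p)
      ≤ ∫ θ in (0:ℝ)..(2*π), (∑ j ∈ Finset.range n, (W j/(n:ℝ)^2) * ((n:ℝ)^p * g (θ + t j))) := by
    refine intervalIntegral.integral_mono_on h2π ?_ ?_ (fun θ _ => key θ)
    · exact (cont_abs_rpow p hp0 F hFcont).intervalIntegrable _ _
    · exact (continuous_finset_sum _ (fun j _ => hsummandcont j)).intervalIntegrable _ _
  have step2 : (∫ θ in (0:ℝ)..(2*π), (∑ j ∈ Finset.range n, (W j/(n:ℝ)^2) * ((n:ℝ)^p * g (θ + t j))))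
      = ∑ j ∈ Finset.range n, (W j/(n:ℝ)^2) * ((n:ℝ)^p * ∫ θ in (0:ℝ)..(2*π), g θ) := by
    rw [intervalIntegral.integral_finset_sum]
    · refine Finset.sum_congr rfl fun j _ => ?_
      rw [intervalIntegral.integral_const_mul, intervalIntegral.integral_const_mul]
      congr 2
      exact shift_int g (per_g P p) (t j)
    · intro j _
      exact (hsummandcont j).intervalIntegrable _ _
  have step3 : (∑ j ∈ Finset.range n, (W j/(n:ℝ)^2) * ((n:ℝ)^p * ∫ θ in (0:ℝ)..(2*π), g θ))
      = (n:ℝ)^p * ∫ θ in (0:ℝ)..(2*π), g θ := by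
    rw [← Finset.sum_mul, ← Finset.sum_div, hWsum]
    field_simp
  calc (∫ θ in (0:ℝ)..(2*π), (‖F θ‖)^p)
      ≤ _ := step1
    _ = _ := step2
    _ = (n:ℝ)^p * ∫ θ in (0:ℝ)..(2*π), g θ := step3

lemma Qstruct (n : ℕ) (P Q : Polynomial ℂ) (hP : P.natDegree = n)
    (hQ : ∀ z : ℂ, z ≠ 0 → Q.eval z = z ^ n * (starRingEnd ℂ) (P.eval ((starRingEnd ℂ) z)⁻¹)) :
    Q = ∑ k ∈ Finset.range (n+1), Polynomial.C ((starRingEnd ℂ) (P.coeff (n - k))) * Polynomial.X ^ k := by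
  set Q₀ : Polynomial ℂ := ∑ k ∈ Finset.range (n+1), Polynomial.C ((starRingEnd ℂ) (P.coeff (n - k))) * Polynomial.X ^ k with hQ₀
  have heval : ∀ z : ℂ, z ≠ 0 → Q.eval z = Q₀.eval z := by
    intro z hz
    rw [hQ z hz, hQ₀]
    have hPe : P.eval ((starRingEnd ℂ) z)⁻¹ = ∑ k ∈ Finset.range (n+1), P.coeff k * ((starRingEnd ℂ) z)⁻¹ ^ k :=
      Polynomial.eval_eq_sum_range' (by omega) _
    rw [hPe, map_sum]
    rw [Finset.mul_sum]
    have hterm : ∀ k ∈ Finset.range (n+1),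
        z ^ n * (starRingEnd ℂ) (P.coeff k * ((starRingEnd ℂ) z)⁻¹ ^ k)
          = (starRingEnd ℂ) (P.coeff k) * z ^ (n - k) := by
      intro k hk
      have hk' : k ≤ n := Nat.lt_succ_iff.mp (Finset.mem_range.mp hk)
      rw [map_mul, map_pow, map_inv₀, Complex.conj_conj]
      have : z ^ n * ((starRingEnd ℂ) (P.coeff k) * (z⁻¹) ^ k)
          = (starRingEnd ℂ) (P.coeff k) * (z ^ n * (z⁻¹) ^ k) := by ring
      rw [this]
      congr 1
      rw [inv_pow, ← pow_sub₀ z hz hk']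
    rw [Finset.sum_congr rfl hterm]
    rw [← Finset.sum_range_reflect]
    rw [Polynomial.eval_finset_sum]
    refine Finset.sum_congr rfl fun k hk => ?_
    have hk' : k ≤ n := Nat.lt_succ_iff.mp (Finset.mem_range.mp hk)
    rw [Polynomial.eval_mul, Polynomial.eval_C, Polynomial.eval_pow, Polynomial.eval_X]
    have h1 : n + 1 - 1 - k = n - k := by omega
    have h2 : n - (n - k) = k := by omega
    rw [h1, h2]
  have hroots : Q - Q₀ = 0 := by
    apply Polynomial.eq_zero_of_infinite_isRoot
    apply Set.Infinite.mono (s := {z : ℂ | z ≠ 0})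
    · intro z hz
      simp only [Set.mem_setOf_eq, Polynomial.IsRoot, Polynomial.eval_sub]
      rw [heval z hz]
      ring
    · have : ({(0:ℂ)}ᶜ : Set ℂ).Infinite := Set.Finite.infinite_compl (Set.finite_singleton 0)
      convert this using 1
      ext z; simp
  exact sub_eq_zero.mp hroots

lemma Qdeg (n : ℕ) (P Q : Polynomial ℂ) (hP : P.natDegree = n)
    (hQ : ∀ z : ℂ, z ≠ 0 → Q.eval z = z ^ n * (starRingEnd ℂ) (P.eval ((starRingEnd ℂ) z)⁻¹)) :
    Q.natDegree ≤ n := by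
  rw [Qstruct n P Q hP hQ]
  refine le_trans (Polynomial.natDegree_sum_le _ _) ?_
  rw [Finset.fold_max_le]
  constructor
  · exact Nat.zero_le n
  · intro k hk
    refine le_trans (Polynomial.natDegree_C_mul_le _ _) ?_
    rw [Polynomial.natDegree_X_pow]
    exact Nat.lt_succ_iff.mp (Finset.mem_range.mp hk)

lemma Qcoeff (n : ℕ) (P Q : Polynomial ℂ) (hP : P.natDegree = n)
    (hQ : ∀ z : ℂ, z ≠ 0 → Q.eval z = z ^ n * (starRingEnd ℂ) (P.eval ((starRingEnd ℂ) z)⁻¹))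
    (k : ℕ) (hk : k ≤ n) :
    Q.coeff k = (starRingEnd ℂ) (P.coeff (n - k)) := by
  rw [Qstruct n P Q hP hQ]
  rw [Polynomial.finset_sum_coeff]
  rw [Finset.sum_congr rfl (fun j _ => Polynomial.coeff_C_mul_X_pow _ _ _)]
  rw [Finset.sum_ite_eq (Finset.range (n+1)) k]
  rw [if_pos (Finset.mem_range.mpr (by omega))]

lemma reflect_id (n : ℕ) (R S : Polynomial ℂ) (hR : R.natDegree ≤ n) (hS : S.natDegree ≤ n)
    (hc : ∀ k, k ≤ n → S.coeff k = (starRingEnd ℂ) (R.coeff (n - k))) (θ : ℝ) :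
    (n:ℂ) * S.eval (Complex.exp (I * (θ:ℂ))) - Complex.exp (I * (θ:ℂ)) * (derivative S).eval (Complex.exp (I * (θ:ℂ)))
      = (Complex.exp (I * (θ:ℂ)))^n * (starRingEnd ℂ) (Complex.exp (I * (θ:ℂ)) * (derivative R).eval (Complex.exp (I * (θ:ℂ)))) := by
  set z : ℂ := Complex.exp (I * (θ:ℂ)) with hz
  have hzk : ∀ k, k ≤ n → z^n * (starRingEnd ℂ) (z^k) = z^(n-k) := by
    intro k hk
    rw [hz, ← Complex.exp_nat_mul, ← Complex.exp_nat_mul, ← Complex.exp_nat_mul]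
    rw [← Complex.exp_conj]
    rw [← Complex.exp_add]
    congr 1
    have hconj : (starRingEnd ℂ) ((k:ℂ) * (I * (θ:ℂ))) = -((k:ℂ) * (I * (θ:ℂ))) := by
      rw [map_mul, map_mul, Complex.conj_I, Complex.conj_natCast, Complex.conj_ofReal]
      ring
    rw [hconj, Nat.cast_sub hk]
    ring
  have hLHS : (n:ℂ) * S.eval z - z * (derivative S).eval z
      = ∑ k ∈ Finset.range (n+1), ((n:ℂ) - k) * S.coeff k * z ^ k := by
    rw [Polynomial.eval_eq_sum_range' (by omega : S.natDegree < n+1), zderiv S (n+1) (by omega) z,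
      Finset.mul_sum, ← Finset.sum_sub_distrib]
    refine Finset.sum_congr rfl fun k _ => ?_
    ring
  have hRHS : z^n * (starRingEnd ℂ) (z * (derivative R).eval z)
      = ∑ k ∈ Finset.range (n+1), ((n:ℂ) - k) * S.coeff k * z ^ k := by
    rw [zderiv R (n+1) (by omega) z, map_sum, Finset.mul_sum]
    have hterm : ∀ k ∈ Finset.range (n+1),
        z^n * (starRingEnd ℂ) ((k:ℂ) * R.coeff k * z ^ k)
          = (k:ℂ) * (starRingEnd ℂ) (R.coeff k) * z ^ (n - k) := by
      intro k hk
      rw [map_mul, map_mul, Complex.conj_natCast]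
      have : z ^ n * ((k:ℂ) * (starRingEnd ℂ) (R.coeff k) * (starRingEnd ℂ) (z ^ k))
          = (k:ℂ) * (starRingEnd ℂ) (R.coeff k) * (z^n * (starRingEnd ℂ) (z^k)) := by ring
      rw [this, hzk k (Nat.lt_succ_iff.mp (Finset.mem_range.mp hk))]
    rw [Finset.sum_congr rfl hterm, ← Finset.sum_range_reflect]
    refine Finset.sum_congr rfl fun k hk => ?_
    have hk' : k ≤ n := Nat.lt_succ_iff.mp (Finset.mem_range.mp hk)
    have h1 : n + 1 - 1 - k = n - k := by omega
    have h2 : n - (n - k) = k := by omega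
    rw [h1, h2, hc k hk', Nat.cast_sub hk']
  rw [hLHS, hRHS]

lemma pointwise_bound (n : ℕ) (P Q : Polynomial ℂ) (hPdeg : P.natDegree ≤ n) (hQdeg : Q.natDegree ≤ n)
    (hcQ : ∀ k, k ≤ n → Q.coeff k = (starRingEnd ℂ) (P.coeff (n - k)))
    (hcP : ∀ k, k ≤ n → P.coeff k = (starRingEnd ℂ) (Q.coeff (n - k)))
    (α : ℂ) (β θ : ℝ) :
    ‖((n : ℂ) * Q.eval (Complex.exp (I * (θ:ℂ))) +
        (α - Complex.exp (I * (θ:ℂ))) * (derivative Q).eval (Complex.exp (I * (θ:ℂ)))) +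
      Complex.exp (I * (β:ℂ)) *
        ((n : ℂ) * P.eval (Complex.exp (I * (θ:ℂ))) +
          (α - Complex.exp (I * (θ:ℂ))) * (derivative P).eval (Complex.exp (I * (θ:ℂ))))‖
      ≤ (‖α‖ + 1) *
        ‖Complex.exp (I * (θ:ℂ)) * (derivative Q).eval (Complex.exp (I * (θ:ℂ)))
          + Complex.exp (I * (β:ℂ)) * (Complex.exp (I * (θ:ℂ)) * (derivative P).eval (Complex.exp (I * (θ:ℂ))))‖ := by
  set z : ℂ := Complex.exp (I * (θ:ℂ)) with hz
  set u : ℂ := z * (derivative P).eval z with hu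
  set v : ℂ := z * (derivative Q).eval z with hv
  set lam : ℂ := Complex.exp (I * (β:ℂ)) with hlam
  have hza : ‖z‖ = 1 := by
    rw [hz, Complex.norm_exp]
    simp
  have hlam1 : ‖lam‖ = 1 := by
    rw [hlam, Complex.norm_exp]
    simp
  have idQ := reflect_id n P Q hPdeg hQdeg hcQ θ
  have idP := reflect_id n Q P hQdeg hPdeg hcP θ
  rw [← hz] at idQ idP
  set w : ℂ := ((n : ℂ) * Q.eval z + (α - z) * (derivative Q).eval z)
      + lam * ((n : ℂ) * P.eval z + (α - z) * (derivative P).eval z) with hw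
  have hzw : z * w = z^(n+1) * ((starRingEnd ℂ) u + lam * (starRingEnd ℂ) v) + α * (v + lam * u) := by
    rw [hw, hu, hv]
    linear_combination z * idQ + z * lam * idP
  have habs1 : ‖w‖ = ‖z * w‖ := by
    rw [norm_mul, hza, one_mul]
  have hconjeq : ‖(starRingEnd ℂ) u + lam * (starRingEnd ℂ) v‖ = ‖v + lam * u‖ := by
    have h1 : (starRingEnd ℂ) ((starRingEnd ℂ) u + lam * (starRingEnd ℂ) v)
        = u + (starRingEnd ℂ) lam * v := by
      simp
    have h2 : lam * (u + (starRingEnd ℂ) lam * v) = lam * u + v := by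
      have : lam * (starRingEnd ℂ) lam = 1 := by
        rw [hlam, ← Complex.exp_conj]
        rw [← Complex.exp_add]
        have : (starRingEnd ℂ) (I * (β:ℂ)) = -(I * (β:ℂ)) := by
          rw [map_mul, Complex.conj_I, Complex.conj_ofReal]
          ring
        rw [this]
        simp
      calc lam * (u + (starRingEnd ℂ) lam * v) = lam * u + (lam * (starRingEnd ℂ) lam) * v := by ring
        _ = lam * u + v := by rw [this]; ring
    calc ‖(starRingEnd ℂ) u + lam * (starRingEnd ℂ) v‖
        = ‖(starRingEnd ℂ) ((starRingEnd ℂ) u + lam * (starRingEnd ℂ) v)‖ := (Complex.norm_conj _).symm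
      _ = ‖u + (starRingEnd ℂ) lam * v‖ := by rw [h1]
      _ = ‖lam * (u + (starRingEnd ℂ) lam * v)‖ := by rw [norm_mul, hlam1, one_mul]
      _ = ‖lam * u + v‖ := by rw [h2]
      _ = ‖v + lam * u‖ := by rw [add_comm]
  calc ‖w‖ = ‖z * w‖ := habs1
    _ ≤ ‖z^(n+1) * ((starRingEnd ℂ) u + lam * (starRingEnd ℂ) v)‖ + ‖α * (v + lam * u)‖ := by
        rw [hzw]
        exact norm_add_le _ _
    _ = ‖(starRingEnd ℂ) u + lam * (starRingEnd ℂ) v‖ + ‖α‖ * ‖v + lam * u‖ := by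
        rw [norm_mul (z^(n+1)), norm_mul α, norm_pow, hza, one_pow, one_mul]
    _ = ‖v + lam * u‖ + ‖α‖ * ‖v + lam * u‖ := by rw [hconjeq]
    _ = (‖α‖ + 1) * ‖v + lam * u‖ := by ring

theorem lemma3_double_integral (n : ℕ) (hn : 1 ≤ n) (P Q : Polynomial ℂ)
    (hP : P.natDegree = n) (hP0 : P.eval 0 ≠ 0)
    (hQ : ∀ z : ℂ, z ≠ 0 →
      Q.eval z = z ^ n * (starRingEnd ℂ) (P.eval ((starRingEnd ℂ) z)⁻¹))
    (α : ℂ) (p : ℝ) (hp : 1 ≤ p) :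
    (∫ β in (0:ℝ)..(2 * π), ∫ θ in (0:ℝ)..(2 * π),
        (‖((n : ℂ) * Q.eval (Complex.exp (I * θ)) +
              (α - Complex.exp (I * θ)) * (derivative Q).eval (Complex.exp (I * θ))) +
            Complex.exp (I * β) *
              ((n : ℂ) * P.eval (Complex.exp (I * θ)) +
                (α - Complex.exp (I * θ)) * (derivative P).eval (Complex.exp (I * θ)))‖) ^ p)
      ≤ 2 * π * (n : ℝ) ^ p * (‖α‖ + 1) ^ p *
          ∫ θ in (0:ℝ)..(2 * π), (‖P.eval (Complex.exp (I * θ))‖) ^ p := by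
  have hp0 : (0:ℝ) ≤ p := le_trans zero_le_one hp
  have h2π : (0:ℝ) ≤ 2*π := by positivity
  have hca : (0:ℝ) ≤ ‖α‖ + 1 := by positivity
  have hc0 : (0:ℝ) ≤ (‖α‖ + 1)^p := Real.rpow_nonneg hca p
  have hPdeg : P.natDegree ≤ n := le_of_eq hP
  have hQdeg : Q.natDegree ≤ n := Qdeg n P Q hP hQ
  have hcQ : ∀ k, k ≤ n → Q.coeff k = (starRingEnd ℂ) (P.coeff (n-k)) :=
    fun k hk => Qcoeff n P Q hP hQ k hk
  have hcP : ∀ k, k ≤ n → P.coeff k = (starRingEnd ℂ) (Q.coeff (n-k)) := by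
    intro k hk
    have h1 := Qcoeff n P Q hP hQ (n-k) (by omega)
    have h2 : n - (n-k) = k := by omega
    rw [h2] at h1
    rw [h1, Complex.conj_conj]
  -- continuity infrastructure
  have cE1 : Continuous fun q : ℝ×ℝ => Complex.exp (I * ((q.1 : ℝ):ℂ)) := cont_exp_circle.comp continuous_fst
  have cE2 : Continuous fun q : ℝ×ℝ => Complex.exp (I * ((q.2 : ℝ):ℂ)) := cont_exp_circle.comp continuous_snd
  have cQe : Continuous fun q : ℝ×ℝ => Q.eval (Complex.exp (I * ((q.2 : ℝ):ℂ))) := (Q.continuous_aeval).comp cE2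
  have cPe : Continuous fun q : ℝ×ℝ => P.eval (Complex.exp (I * ((q.2 : ℝ):ℂ))) := (P.continuous_aeval).comp cE2
  have cQd : Continuous fun q : ℝ×ℝ => (derivative Q).eval (Complex.exp (I * ((q.2 : ℝ):ℂ))) := ((derivative Q).continuous_aeval).comp cE2
  have cPd : Continuous fun q : ℝ×ℝ => (derivative P).eval (Complex.exp (I * ((q.2 : ℝ):ℂ))) := ((derivative P).continuous_aeval).comp cE2
  have cf2 : Continuous fun q : ℝ×ℝ => (‖((n : ℂ) * Q.eval (Complex.exp (I * ((q.2 : ℝ):ℂ))) + (α - Complex.exp (I * ((q.2 : ℝ):ℂ))) * (derivative Q).eval (Complex.exp (I * ((q.2 : ℝ):ℂ)))) + Complex.exp (I * ((q.1 : ℝ):ℂ)) * ((n : ℂ) * P.eval (Complex.exp (I * ((q.2 : ℝ):ℂ))) + (α - Complex.exp (I * ((q.2 : ℝ):ℂ))) * (derivative P).eval (Complex.exp (I * ((q.2 : ℝ):ℂ))))‖) ^ p := by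
    apply cont_abs_rpow p hp0
    exact ((continuous_const.mul cQe).add (((continuous_const.sub cE2)).mul cQd)).add
      (cE1.mul ((continuous_const.mul cPe).add (((continuous_const.sub cE2)).mul cPd)))
  have cG2 : Continuous fun q : ℝ×ℝ => (‖(Complex.exp (I * ((q.2 : ℝ):ℂ)) * (derivative Q).eval (Complex.exp (I * ((q.2 : ℝ):ℂ)))) + Complex.exp (I * ((q.1 : ℝ):ℂ)) * (Complex.exp (I * ((q.2 : ℝ):ℂ)) * (derivative P).eval (Complex.exp (I * ((q.2 : ℝ):ℂ))))‖) ^ p := by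
    apply cont_abs_rpow p hp0
    exact (cE2.mul cQd).add (cE1.mul (cE2.mul cPd))
  have cH2 : Continuous fun q : ℝ×ℝ => (‖(n:ℂ) * P.eval (Complex.exp (I * ((q.2 : ℝ):ℂ))) + (Complex.exp (I * ((q.1 : ℝ):ℂ)) - 1) * (Complex.exp (I * ((q.2 : ℝ):ℂ)) * (derivative P).eval (Complex.exp (I * ((q.2 : ℝ):ℂ))))‖) ^ p := by
    apply cont_abs_rpow p hp0
    exact (continuous_const.mul cPe).add ((cE1.sub continuous_const).mul (cE2.mul cPd))
  -- swapped-order versions for Fubini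
  have cG2' : Continuous fun q : ℝ×ℝ => (‖(Complex.exp (I * ((q.1 : ℝ):ℂ)) * (derivative Q).eval (Complex.exp (I * ((q.1 : ℝ):ℂ)))) + Complex.exp (I * ((q.2 : ℝ):ℂ)) * (Complex.exp (I * ((q.1 : ℝ):ℂ)) * (derivative P).eval (Complex.exp (I * ((q.1 : ℝ):ℂ))))‖) ^ p := by
    apply cont_abs_rpow p hp0
    have cQd' : Continuous fun q : ℝ×ℝ => (derivative Q).eval (Complex.exp (I * ((q.1 : ℝ):ℂ))) := ((derivative Q).continuous_aeval).comp cE1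
    have cPd' : Continuous fun q : ℝ×ℝ => (derivative P).eval (Complex.exp (I * ((q.1 : ℝ):ℂ))) := ((derivative P).continuous_aeval).comp cE1
    exact (cE1.mul cQd').add (cE2.mul (cE1.mul cPd'))
  have cH2' : Continuous fun q : ℝ×ℝ => (‖(n:ℂ) * P.eval (Complex.exp (I * ((q.1 : ℝ):ℂ))) + (Complex.exp (I * ((q.2 : ℝ):ℂ)) - 1) * (Complex.exp (I * ((q.1 : ℝ):ℂ)) * (derivative P).eval (Complex.exp (I * ((q.1 : ℝ):ℂ))))‖) ^ p := by
    apply cont_abs_rpow p hp0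
    have cPe' : Continuous fun q : ℝ×ℝ => P.eval (Complex.exp (I * ((q.1 : ℝ):ℂ))) := (P.continuous_aeval).comp cE1
    have cPd' : Continuous fun q : ℝ×ℝ => (derivative P).eval (Complex.exp (I * ((q.1 : ℝ):ℂ))) := ((derivative P).continuous_aeval).comp cE1
    exact (continuous_const.mul cPe').add ((cE2.sub continuous_const).mul (cE1.mul cPd'))
  -- step 1 : pointwise bound inside the inner integral
  have hfG : ∀ β : ℝ, (∫ θ in (0:ℝ)..(2*π), (‖((n : ℂ) * Q.eval (Complex.exp (I * (θ:ℂ))) + (α - Complex.exp (I * (θ:ℂ))) * (derivative Q).eval (Complex.exp (I * (θ:ℂ)))) + Complex.exp (I * (β:ℂ)) * ((n : ℂ) * P.eval (Complex.exp (I * (θ:ℂ))) + (α - Complex.exp (I * (θ:ℂ))) * (derivative P).eval (Complex.exp (I * (θ:ℂ))))‖) ^ p)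
      ≤ (‖α‖ + 1)^p * ∫ θ in (0:ℝ)..(2*π), (‖(Complex.exp (I * (θ:ℂ)) * (derivative Q).eval (Complex.exp (I * (θ:ℂ)))) + Complex.exp (I * (β:ℂ)) * (Complex.exp (I * (θ:ℂ)) * (derivative P).eval (Complex.exp (I * (θ:ℂ))))‖) ^ p := by
    intro β
    rw [← intervalIntegral.integral_const_mul]
    refine intervalIntegral.integral_mono_on h2π ?_ ?_ (fun θ _ => ?_)
    · exact ((cf2.comp (Continuous.prodMk_right β)).intervalIntegrable _ _)
    · exact ((continuous_const.mul (cG2.comp (Continuous.prodMk_right β))).intervalIntegrable _ _)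
    · have hpt := pointwise_bound n P Q hPdeg hQdeg hcQ hcP α β θ
      calc (‖((n : ℂ) * Q.eval (Complex.exp (I * (θ:ℂ))) + (α - Complex.exp (I * (θ:ℂ))) * (derivative Q).eval (Complex.exp (I * (θ:ℂ)))) + Complex.exp (I * (β:ℂ)) * ((n : ℂ) * P.eval (Complex.exp (I * (θ:ℂ))) + (α - Complex.exp (I * (θ:ℂ))) * (derivative P).eval (Complex.exp (I * (θ:ℂ))))‖) ^ p
          ≤ ((‖α‖ + 1) * ‖(Complex.exp (I * (θ:ℂ)) * (derivative Q).eval (Complex.exp (I * (θ:ℂ)))) + Complex.exp (I * (β:ℂ)) * (Complex.exp (I * (θ:ℂ)) * (derivative P).eval (Complex.exp (I * (θ:ℂ))))‖)^p :=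
            Real.rpow_le_rpow (norm_nonneg _) hpt hp0
        _ = (‖α‖ + 1)^p * (‖(Complex.exp (I * (θ:ℂ)) * (derivative Q).eval (Complex.exp (I * (θ:ℂ)))) + Complex.exp (I * (β:ℂ)) * (Complex.exp (I * (θ:ℂ)) * (derivative P).eval (Complex.exp (I * (θ:ℂ))))‖) ^ p :=
            Real.mul_rpow hca (norm_nonneg _)
  -- step 4 : per-θ phase rotation
  have hGH : ∀ θ : ℝ, (∫ β in (0:ℝ)..(2*π), (‖(Complex.exp (I * (θ:ℂ)) * (derivative Q).eval (Complex.exp (I * (θ:ℂ)))) + Complex.exp (I * (β:ℂ)) * (Complex.exp (I * (θ:ℂ)) * (derivative P).eval (Complex.exp (I * (θ:ℂ))))‖) ^ p)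
      = ∫ β in (0:ℝ)..(2*π), (‖(n:ℂ) * P.eval (Complex.exp (I * (θ:ℂ))) + (Complex.exp (I * (β:ℂ)) - 1) * (Complex.exp (I * (θ:ℂ)) * (derivative P).eval (Complex.exp (I * (θ:ℂ))))‖) ^ p := by
    intro θ
    have idP := reflect_id n Q P hQdeg hPdeg hcP θ
    have habs : ‖(n:ℂ) * P.eval (Complex.exp (I * (θ:ℂ))) - Complex.exp (I * (θ:ℂ)) * (derivative P).eval (Complex.exp (I * (θ:ℂ)))‖
        = ‖(Complex.exp (I * (θ:ℂ)) * (derivative Q).eval (Complex.exp (I * (θ:ℂ))))‖ := by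
      rw [idP, norm_mul, norm_pow, Complex.norm_conj]
      have : ‖Complex.exp (I * (θ:ℂ))‖ = 1 := by rw [Complex.norm_exp]; simp
      rw [this, one_pow, one_mul]
    have e1 := phase_int p ((Complex.exp (I * (θ:ℂ)) * (derivative Q).eval (Complex.exp (I * (θ:ℂ))))) ((Complex.exp (I * (θ:ℂ)) * (derivative P).eval (Complex.exp (I * (θ:ℂ)))))
    have e2 := phase_int p ((n:ℂ) * P.eval (Complex.exp (I * (θ:ℂ))) - Complex.exp (I * (θ:ℂ)) * (derivative P).eval (Complex.exp (I * (θ:ℂ)))) ((Complex.exp (I * (θ:ℂ)) * (derivative P).eval (Complex.exp (I * (θ:ℂ)))))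
    rw [habs] at e2
    rw [e1, ← e2]
    refine intervalIntegral.integral_congr (fun β _ => ?_)
    congr 2
    ring
  -- assemble
  have step6 : (∫ β in (0:ℝ)..(2*π), ∫ θ in (0:ℝ)..(2*π), (‖(n:ℂ) * P.eval (Complex.exp (I * (θ:ℂ))) + (Complex.exp (I * (β:ℂ)) - 1) * (Complex.exp (I * (θ:ℂ)) * (derivative P).eval (Complex.exp (I * (θ:ℂ))))‖) ^ p)
      ≤ ∫ β in (0:ℝ)..(2*π), ((n:ℝ)^p * ∫ θ in (0:ℝ)..(2*π), (‖P.eval (Complex.exp (I * (θ:ℂ)))‖) ^ p) := by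
    refine intervalIntegral.integral_mono_on h2π ?_ ?_ (fun β _ => core_ineq n hn P hPdeg β p hp)
    · exact (intervalIntegral.continuous_parametric_intervalIntegral_of_continuous'
        (by exact cH2) 0 (2*π)).intervalIntegrable _ _
    · exact continuous_const.intervalIntegrable _ _
  have step7 : (∫ β in (0:ℝ)..(2*π), ((n:ℝ)^p * ∫ θ in (0:ℝ)..(2*π), (‖P.eval (Complex.exp (I * (θ:ℂ)))‖) ^ p))
      = 2 * π * ((n:ℝ)^p * ∫ θ in (0:ℝ)..(2*π), (‖P.eval (Complex.exp (I * (θ:ℂ)))‖) ^ p) := by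
    rw [intervalIntegral.integral_const]
    rw [smul_eq_mul, sub_zero]
  calc (∫ β in (0:ℝ)..(2 * π), ∫ θ in (0:ℝ)..(2 * π), (‖((n : ℂ) * Q.eval (Complex.exp (I * (θ:ℂ))) + (α - Complex.exp (I * (θ:ℂ))) * (derivative Q).eval (Complex.exp (I * (θ:ℂ)))) + Complex.exp (I * (β:ℂ)) * ((n : ℂ) * P.eval (Complex.exp (I * (θ:ℂ))) + (α - Complex.exp (I * (θ:ℂ))) * (derivative P).eval (Complex.exp (I * (θ:ℂ))))‖) ^ p)
      ≤ ∫ β in (0:ℝ)..(2*π), ((‖α‖ + 1)^p * ∫ θ in (0:ℝ)..(2*π), (‖(Complex.exp (I * (θ:ℂ)) * (derivative Q).eval (Complex.exp (I * (θ:ℂ)))) + Complex.exp (I * (β:ℂ)) * (Complex.exp (I * (θ:ℂ)) * (derivative P).eval (Complex.exp (I * (θ:ℂ))))‖) ^ p) := by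
        refine intervalIntegral.integral_mono_on h2π ?_ ?_ (fun β _ => hfG β)
        · exact (intervalIntegral.continuous_parametric_intervalIntegral_of_continuous'
            (by exact cf2) 0 (2*π)).intervalIntegrable _ _
        · exact (continuous_const.mul (intervalIntegral.continuous_parametric_intervalIntegral_of_continuous'
            (by exact cG2) 0 (2*π))).intervalIntegrable _ _
    _ = (‖α‖ + 1)^p * ∫ β in (0:ℝ)..(2*π), ∫ θ in (0:ℝ)..(2*π), (‖(Complex.exp (I * (θ:ℂ)) * (derivative Q).eval (Complex.exp (I * (θ:ℂ)))) + Complex.exp (I * (β:ℂ)) * (Complex.exp (I * (θ:ℂ)) * (derivative P).eval (Complex.exp (I * (θ:ℂ))))‖) ^ p :=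
        intervalIntegral.integral_const_mul _ _
    _ = (‖α‖ + 1)^p * ∫ θ in (0:ℝ)..(2*π), ∫ β in (0:ℝ)..(2*π), (‖(Complex.exp (I * (θ:ℂ)) * (derivative Q).eval (Complex.exp (I * (θ:ℂ)))) + Complex.exp (I * (β:ℂ)) * (Complex.exp (I * (θ:ℂ)) * (derivative P).eval (Complex.exp (I * (θ:ℂ))))‖) ^ p := by
        rw [swapFubini (fun β θ => (‖(Complex.exp (I * (θ:ℂ)) * (derivative Q).eval (Complex.exp (I * (θ:ℂ)))) + Complex.exp (I * (β:ℂ)) * (Complex.exp (I * (θ:ℂ)) * (derivative P).eval (Complex.exp (I * (θ:ℂ))))‖) ^ p) (by exact cG2)]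
    _ = (‖α‖ + 1)^p * ∫ θ in (0:ℝ)..(2*π), ∫ β in (0:ℝ)..(2*π), (‖(n:ℂ) * P.eval (Complex.exp (I * (θ:ℂ))) + (Complex.exp (I * (β:ℂ)) - 1) * (Complex.exp (I * (θ:ℂ)) * (derivative P).eval (Complex.exp (I * (θ:ℂ))))‖) ^ p := by
        rw [intervalIntegral.integral_congr (fun θ _ => hGH θ)]
    _ = (‖α‖ + 1)^p * ∫ β in (0:ℝ)..(2*π), ∫ θ in (0:ℝ)..(2*π), (‖(n:ℂ) * P.eval (Complex.exp (I * (θ:ℂ))) + (Complex.exp (I * (β:ℂ)) - 1) * (Complex.exp (I * (θ:ℂ)) * (derivative P).eval (Complex.exp (I * (θ:ℂ))))‖) ^ p := by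
        rw [swapFubini (fun θ β => (‖(n:ℂ) * P.eval (Complex.exp (I * (θ:ℂ))) + (Complex.exp (I * (β:ℂ)) - 1) * (Complex.exp (I * (θ:ℂ)) * (derivative P).eval (Complex.exp (I * (θ:ℂ))))‖) ^ p) (by exact cH2')]
    _ ≤ (‖α‖ + 1)^p * (2 * π * ((n:ℝ)^p * ∫ θ in (0:ℝ)..(2*π), (‖P.eval (Complex.exp (I * (θ:ℂ)))‖) ^ p)) :=
        mul_le_mul_of_nonneg_left (le_of_le_of_eq step6 step7) hc0
    _ = 2 * π * (n : ℝ) ^ p * (‖α‖ + 1) ^ p * ∫ θ in (0:ℝ)..(2 * π), (‖P.eval (Complex.exp (I * (θ:ℂ)))‖) ^ p := by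
        ring
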